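/- Assume a : ℝⁿ × ℝ → ℝ is continuous, 0 < α ≤ a ≤ β, and a is ℤⁿ-periodic in x. Let Y = [0,1]ⁿ, Ỹ = [−1,0]ⁿ, and define the enlarged reachable set R_t(Y) := ⋃_{x ∈ Y} R_t(x). Then for all real t ≥ s with s ∈ ℕ, one has R_t(Y) ⊆ R_s(Y) + R_{t−s}(Y, s) + Ỹ, where R_{t−s}(Y, s) := ⋃_{x ∈ Y} R_t(x, s) is the enlarged reachable set at time t starting from Y at initial time s. -/

import Mathlib

open Metric Set MeasureTheory Pointwise

noncomputable section

/-- An admissible path on `[s,t]`: a Lipschitz curve whose a.e. derivative is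
bounded in norm by the velocity `a` along the curve. -/
def Admissible {n : ℕ} (a : EuclideanSpace ℝ (Fin n) → ℝ → ℝ) (s t : ℝ)
    (γ : ℝ → EuclideanSpace ℝ (Fin n)) : Prop :=
  (∃ C : NNReal, LipschitzOnWith C γ (Set.Icc s t)) ∧
  ∀ᵐ r ∂(MeasureTheory.volume.restrict (Set.Ioo s t)),
    ∃ v, HasDerivAt γ v r ∧ ‖v‖ ≤ a (γ r) r

/-- The reachable set at time `t` starting from `x` at time `s`. -/
def Reach {n : ℕ} (a : EuclideanSpace ℝ (Fin n) → ℝ → ℝ) (s t : ℝ)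
    (x : EuclideanSpace ℝ (Fin n)) : Set (EuclideanSpace ℝ (Fin n)) :=
  {y | ∃ γ, Admissible a s t γ ∧ γ s = x ∧ γ t = y}

/-- An integer vector viewed as a point of `ℝⁿ`. -/
def intVec {n : ℕ} (k : Fin n → ℤ) : EuclideanSpace ℝ (Fin n) :=
  WithLp.toLp 2 (fun i => (k i : ℝ))

/-- The unit cube `[0,1]ⁿ`. -/
def unitCube (n : ℕ) : Set (EuclideanSpace ℝ (Fin n)) :=
  {x | ∀ i, x i ∈ Set.Icc (0:ℝ) 1}

/-- The reflected unit cube `[-1,0]ⁿ`. -/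
def negCube (n : ℕ) : Set (EuclideanSpace ℝ (Fin n)) :=
  {x | ∀ i, x i ∈ Set.Icc (-1:ℝ) 0}

/-- The enlarged reachable set at time `t` starting from the unit cube at time `s`. -/
def ReachY {n : ℕ} (a : EuclideanSpace ℝ (Fin n) → ℝ → ℝ) (s t : ℝ) :
    Set (EuclideanSpace ℝ (Fin n)) :=
  ⋃ x ∈ unitCube n, Reach a s t x

theorem reachY_subadd {n : ℕ} (a : EuclideanSpace ℝ (Fin n) → ℝ → ℝ)
    (α β : ℝ) (hα : 0 < α) (hαβ : α ≤ β)
    (hcont : Continuous (fun p : EuclideanSpace ℝ (Fin n) × ℝ => a p.1 p.2))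
    (hbd : ∀ x t, α ≤ a x t ∧ a x t ≤ β)
    (hper : ∀ (x : EuclideanSpace ℝ (Fin n)) (t : ℝ) (k : Fin n → ℤ),
      a (x + intVec k) t = a x t)
    (s : ℕ) (t : ℝ) (hst : (s : ℝ) ≤ t) :
    ReachY a 0 t ⊆ ReachY a 0 s + ReachY a s t + negCube n := by
  rintro y hy
  simp only [ReachY, Set.mem_iUnion, Reach, Set.mem_setOf_eq] at hy
  obtain ⟨x, hx, γ, ⟨⟨C, hC⟩, hae⟩, hγ0, hγt⟩ := hy
  set z := γ s with hz
  set k : Fin n → ℤ := fun i => ⌊z i⌋ with hk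
  have hs0 : (0:ℝ) ≤ s := Nat.cast_nonneg s
  have h1 : z ∈ ReachY a 0 s := by
    refine Set.mem_iUnion₂.mpr ⟨x, hx, γ, ⟨⟨C, hC.mono (Set.Icc_subset_Icc le_rfl hst)⟩, ?_⟩,
      hγ0, rfl⟩
    exact ae_mono (Measure.restrict_mono (Set.Ioo_subset_Ioo le_rfl hst) le_rfl) hae
  have h2 : y - intVec k ∈ ReachY a s t := by
    refine Set.mem_iUnion₂.mpr ⟨z - intVec k, ?_, fun r => γ r - intVec k, ⟨⟨C, ?_⟩, ?_⟩,
      rfl, by show γ t - intVec k = y - intVec k; rw [hγt]⟩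
    · intro i
      have : (z - intVec k) i = Int.fract (z i) := by
        simp only [PiLp.sub_apply, intVec, Int.fract, k]
      rw [this]
      exact ⟨Int.fract_nonneg _, (Int.fract_lt_one _).le⟩
    · intro u hu v hv
      simpa [edist_sub_right] using
        hC.mono (Set.Icc_subset_Icc hs0 le_rfl) hu hv
    · have hmono : ∀ᵐ r ∂(MeasureTheory.volume.restrict (Set.Ioo (s:ℝ) t)),
          ∃ v, HasDerivAt γ v r ∧ ‖v‖ ≤ a (γ r) r :=
        ae_mono (Measure.restrict_mono (Set.Ioo_subset_Ioo hs0 le_rfl) le_rfl) hae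
      filter_upwards [hmono] with r hr
      obtain ⟨v, hv, hvb⟩ := hr
      refine ⟨v, hv.sub_const _, ?_⟩
      have heq : γ r - intVec k = γ r + intVec (fun i => -(k i)) := by
        ext i
        simp [intVec, sub_eq_add_neg]
      rw [heq, hper]
      exact hvb
  have h3 : intVec k - z ∈ negCube n := by
    intro i
    have : (intVec k - z) i = -Int.fract (z i) := by
      simp only [PiLp.sub_apply, intVec, Int.fract, k]
      ring
    rw [this]
    constructor
    · linarith [Int.fract_lt_one (z i)]
    · linarith [Int.fract_nonneg (z i)]
  have hy' : y = (z + (y - intVec k)) + (intVec k - z) := by abel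
  rw [hy']
  exact add_mem_add (add_mem_add h1 h2) h3
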